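/- Let g(x) = (1+x)log(1+x) − x·log(x) for x > 0 (with g(0)=0, using log base 2). For fixed G > 1, define C(n̄_S) = max(0, g(((G+1)n̄_S + (G-1))/2) − g((G-1)(1+n̄_S)/2)). Then C(n̄_S) is nondecreasing in n̄_S ≥ 0, and as n̄_S → 0⁺, C(n̄_S) = Θ(n̄_S); in particular there exists K > 0 such that C(n̄_S) ≤ K · n̄_S for all n̄_S ∈ [0,1]. Consequently, under the constraint n̄_S ≤ 2c·δ/√n (with c, δ > 0), n·C(n̄_S) ≤ 2K·c·δ·√n. -/

import Mathlib

noncomputable def gln (t : ℝ) : ℝ := (1+t) * Real.log (1+t) - t * Real.log t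

lemma gln_deriv {t : ℝ} (ht : 0 < t) :
    HasDerivAt gln (Real.log (1+t) - Real.log t) t := by
  have h1 : HasDerivAt (fun s : ℝ => 1 + s) 1 t := by
    simpa using (hasDerivAt_id t).const_add 1
  have hl1 : HasDerivAt (fun s : ℝ => Real.log (1+s)) (1/(1+t)) t := by
    have := (Real.hasDerivAt_log (by linarith : (1:ℝ)+t ≠ 0)).comp t h1
    simpa [Function.comp_def] using this
  have hA : HasDerivAt (fun s : ℝ => (1+s) * Real.log (1+s))
      (Real.log (1+t) + 1) t := by
    have h := h1.mul hl1
    refine h.congr_deriv ?_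
    rw [one_mul, mul_one_div_cancel (by linarith : (1:ℝ)+t ≠ 0)]
  have hB : HasDerivAt (fun s : ℝ => s * Real.log s) (Real.log t + 1) t := by
    have h := (hasDerivAt_id t).mul (Real.hasDerivAt_log ht.ne')
    refine h.congr_deriv ?_
    simp [ht.ne']
  have h := hA.sub hB
  have h2 : HasDerivAt gln (Real.log (1+t) + 1 - (Real.log t + 1)) t := h
  convert h2 using 1
  ring

lemma logterm_nonneg {t : ℝ} (ht : 0 < t) : 0 ≤ Real.log (1+t) - Real.log t := by
  have := Real.log_le_log ht (by linarith : t ≤ 1 + t)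
  linarith

lemma logterm_anti {u c : ℝ} (hu : 0 < u) (huc : u ≤ c) :
    Real.log (1+c) - Real.log c ≤ Real.log (1+u) - Real.log u := by
  have hc : 0 < c := lt_of_lt_of_le hu huc
  have h1 : Real.log ((1+c)*u) ≤ Real.log ((1+u)*c) := by
    apply Real.log_le_log (by positivity)
    nlinarith
  rw [Real.log_mul (by linarith) hu.ne', Real.log_mul (by linarith) hc.ne'] at h1
  linarith

lemma gln_mono_slope {u v : ℝ} (hu : 0 < u) (huv : u ≤ v) :
    gln u ≤ gln v ∧ gln v - gln u ≤ (Real.log (1+u) - Real.log u) * (v - u) := by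
  rcases eq_or_lt_of_le huv with rfl | h
  · simp
  · obtain ⟨c, hc, hderiv⟩ := exists_hasDerivAt_eq_slope gln
      (fun x => Real.log (1+x) - Real.log x) h
      (fun x hx => (gln_deriv (lt_of_lt_of_le hu hx.1)).continuousAt.continuousWithinAt)
      (fun x hx => gln_deriv (lt_trans hu hx.1))
    have hcpos : 0 < c := lt_trans hu hc.1
    have heq : gln v - gln u = (Real.log (1+c) - Real.log c) * (v - u) := by
      rw [hderiv, div_mul_cancel₀]
      exact sub_ne_zero_of_ne h.ne'
    constructor
    · nlinarith [logterm_nonneg hcpos]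
    · rw [heq]
      have := logterm_anti hu hc.1.le
      nlinarith

lemma psi_deriv {t : ℝ} (ht : 0 < t) :
    HasDerivAt (fun s : ℝ => s * (Real.log (1+s) - Real.log s))
      (Real.log (1+t) - Real.log t - 1/(1+t)) t := by
  have h1 : HasDerivAt (fun s : ℝ => 1 + s) 1 t := by
    simpa using (hasDerivAt_id t).const_add 1
  have hl1 : HasDerivAt (fun s : ℝ => Real.log (1+s)) (1/(1+t)) t := by
    have := (Real.hasDerivAt_log (by linarith : (1:ℝ)+t ≠ 0)).comp t h1
    simpa [Function.comp_def] using this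
  have h := (hasDerivAt_id t).mul (hl1.sub (Real.hasDerivAt_log ht.ne'))
  refine h.congr_deriv ?_
  have h1t : (1:ℝ)+t ≠ 0 := by linarith
  have hq : t * (1/(1+t)) = 1 - 1/(1+t) := by
    rw [eq_sub_iff_add_eq, ← add_one_mul, add_comm t 1, mul_one_div_cancel h1t]
  simp only [Pi.sub_apply, id_eq, one_mul, mul_sub, mul_inv_cancel₀ ht.ne', hq]
  ring

lemma psi_deriv_nonneg {t : ℝ} (ht : 0 < t) :
    0 ≤ Real.log (1+t) - Real.log t - 1/(1+t) := by
  have h := Real.log_le_sub_one_of_pos (show 0 < t/(1+t) by positivity)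
  rw [Real.log_div ht.ne' (by linarith : (1:ℝ)+t ≠ 0)] at h
  have he : t/(1+t) - 1 = -(1/(1+t)) := by field_simp; ring
  rw [he] at h
  linarith

lemma psi_mono {q p : ℝ} (hq : 0 < q) (hqp : q ≤ p) :
    q * (Real.log (1+q) - Real.log q) ≤ p * (Real.log (1+p) - Real.log p) := by
  rcases eq_or_lt_of_le hqp with rfl | h
  · exact le_rfl
  · obtain ⟨c, hc, hderiv⟩ := exists_hasDerivAt_eq_slope
      (fun s : ℝ => s * (Real.log (1+s) - Real.log s))
      (fun s => Real.log (1+s) - Real.log s - 1/(1+s)) h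
      (fun x hx => (psi_deriv (lt_of_lt_of_le hq hx.1)).continuousAt.continuousWithinAt)
      (fun x hx => psi_deriv (lt_trans hq hx.1))
    have h1 := psi_deriv_nonneg (lt_trans hq hc.1)
    rw [hderiv] at h1
    have h2 : 0 < p - q := by linarith
    have h3 := mul_nonneg h1 h2.le
    rw [div_mul_cancel₀ _ h2.ne'] at h3
    linarith

lemma key_ineq {A B p q : ℝ} (hB : 0 < B) (hq : 0 < q) (hqp : q ≤ p) (hApq : B * p ≤ A * q) :
    B * (Real.log (1+q) - Real.log q) ≤ A * (Real.log (1+p) - Real.log p) := by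
  have hp : 0 < p := lt_of_lt_of_le hq hqp
  have hA : 0 < A := by nlinarith
  have hψ := psi_mono hq hqp
  have hLq := logterm_nonneg hq
  nlinarith [mul_le_mul_of_nonneg_right hApq hLq, mul_le_mul_of_nonneg_left hψ hA.le]

/-- the capacity difference in gln form is monotone on [0,∞) -/
lemma F_mono (G : ℝ) (hG : 1 < G) {x y : ℝ} (hx : 0 ≤ x) (hxy : x ≤ y) :
    gln (((G+1)*x+(G-1))/2) - gln ((G-1)*(1+x)/2)
      ≤ gln (((G+1)*y+(G-1))/2) - gln ((G-1)*(1+y)/2) := by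
  set F : ℝ → ℝ := fun s => gln (((G+1)*s+(G-1))/2) - gln ((G-1)*(1+s)/2) with hF
  have hDF : ∀ s : ℝ, 0 ≤ s → HasDerivAt F
      ((Real.log (1+((G+1)*s+(G-1))/2) - Real.log (((G+1)*s+(G-1))/2)) * ((G+1)/2)
        - (Real.log (1+(G-1)*(1+s)/2) - Real.log ((G-1)*(1+s)/2)) * ((G-1)/2)) s := by
    intro s hs
    have hap : 0 < ((G+1)*s+(G-1))/2 := by nlinarith
    have hbp : 0 < (G-1)*(1+s)/2 := by nlinarith
    have ha : HasDerivAt (fun u : ℝ => ((G+1)*u+(G-1))/2) ((G+1)/2) s := by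
      simpa using (((hasDerivAt_id s).const_mul (G+1)).add_const (G-1)).div_const 2
    have hb : HasDerivAt (fun u : ℝ => (G-1)*(1+u)/2) ((G-1)/2) s := by
      have h0 : HasDerivAt (fun u : ℝ => 1 + u) 1 s := by
        simpa using (hasDerivAt_id s).const_add 1
      simpa using ((h0.const_mul (G-1)).div_const 2)
    exact ((gln_deriv hap).comp s ha).sub ((gln_deriv hbp).comp s hb)
  have hD0 : ∀ s : ℝ, 0 ≤ s →
      0 ≤ (Real.log (1+((G+1)*s+(G-1))/2) - Real.log (((G+1)*s+(G-1))/2)) * ((G+1)/2)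
        - (Real.log (1+(G-1)*(1+s)/2) - Real.log ((G-1)*(1+s)/2)) * ((G-1)/2) := by
    intro s hs
    have h := key_ineq (A := (G+1)/2) (B := (G-1)/2)
      (p := ((G+1)*s+(G-1))/2) (q := (G-1)*(1+s)/2)
      (by linarith) (by nlinarith) (by nlinarith) (by nlinarith)
    linarith [h]
  rcases eq_or_lt_of_le hxy with rfl | h
  · exact le_rfl
  · obtain ⟨c, hc, hderiv⟩ := exists_hasDerivAt_eq_slope F
      (fun s => (Real.log (1+((G+1)*s+(G-1))/2) - Real.log (((G+1)*s+(G-1))/2)) * ((G+1)/2)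
        - (Real.log (1+(G-1)*(1+s)/2) - Real.log ((G-1)*(1+s)/2)) * ((G-1)/2)) h
      (fun s hs => (hDF s (le_trans hx hs.1)).continuousAt.continuousWithinAt)
      (fun s hs => hDF s (le_trans hx hs.1.le))
    have h1 := hD0 c (le_trans hx hc.1.le)
    rw [hderiv] at h1
    have h2 : 0 < y - x := by linarith
    have h3 := mul_nonneg h1 h2.le
    rw [div_mul_cancel₀ _ h2.ne'] at h3
    have hfin : F x ≤ F y := by linarith
    exact hfin

lemma expr_eq (G x : ℝ) :
    ((1 + ((G + 1) * x + (G - 1)) / 2) * Real.logb 2 (1 + ((G + 1) * x + (G - 1)) / 2)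
      - (((G + 1) * x + (G - 1)) / 2) * Real.logb 2 (((G + 1) * x + (G - 1)) / 2))
    - ((1 + (G - 1) * (1 + x) / 2) * Real.logb 2 (1 + (G - 1) * (1 + x) / 2)
      - ((G - 1) * (1 + x) / 2) * Real.logb 2 ((G - 1) * (1 + x) / 2))
    = (gln (((G + 1) * x + (G - 1)) / 2) - gln ((G - 1) * (1 + x) / 2)) / Real.log 2 := by
  simp only [gln, Real.logb]
  ring

theorem amplifier_capacity_bound_scaling (G : ℝ) (hG : 1 < G) :
    (∀ x y : ℝ, 0 ≤ x → x ≤ y →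
      max 0 (((1 + ((G + 1) * x + (G - 1)) / 2) * Real.logb 2 (1 + ((G + 1) * x + (G - 1)) / 2)
              - (((G + 1) * x + (G - 1)) / 2) * Real.logb 2 (((G + 1) * x + (G - 1)) / 2))
            - ((1 + (G - 1) * (1 + x) / 2) * Real.logb 2 (1 + (G - 1) * (1 + x) / 2)
              - ((G - 1) * (1 + x) / 2) * Real.logb 2 ((G - 1) * (1 + x) / 2)))
      ≤ max 0 (((1 + ((G + 1) * y + (G - 1)) / 2) * Real.logb 2 (1 + ((G + 1) * y + (G - 1)) / 2)
              - (((G + 1) * y + (G - 1)) / 2) * Real.logb 2 (((G + 1) * y + (G - 1)) / 2))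
            - ((1 + (G - 1) * (1 + y) / 2) * Real.logb 2 (1 + (G - 1) * (1 + y) / 2)
              - ((G - 1) * (1 + y) / 2) * Real.logb 2 ((G - 1) * (1 + y) / 2))))
    ∧ ∃ K : ℝ, 0 < K ∧
        (∀ nS ∈ Set.Icc (0:ℝ) 1,
          max 0 (((1 + ((G + 1) * nS + (G - 1)) / 2) * Real.logb 2 (1 + ((G + 1) * nS + (G - 1)) / 2)
                  - (((G + 1) * nS + (G - 1)) / 2) * Real.logb 2 (((G + 1) * nS + (G - 1)) / 2))
                - ((1 + (G - 1) * (1 + nS) / 2) * Real.logb 2 (1 + (G - 1) * (1 + nS) / 2)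
                  - ((G - 1) * (1 + nS) / 2) * Real.logb 2 ((G - 1) * (1 + nS) / 2)))
            ≤ K * nS)
        ∧ ∀ (n : ℕ) (c δ nS : ℝ), 0 < c → 0 < δ → 0 ≤ nS → nS ≤ 1 →
            nS ≤ 2 * c * δ / Real.sqrt n →
            (n : ℝ) *
              max 0 (((1 + ((G + 1) * nS + (G - 1)) / 2) * Real.logb 2 (1 + ((G + 1) * nS + (G - 1)) / 2)
                    - (((G + 1) * nS + (G - 1)) / 2) * Real.logb 2 (((G + 1) * nS + (G - 1)) / 2))
                  - ((1 + (G - 1) * (1 + nS) / 2) * Real.logb 2 (1 + (G - 1) * (1 + nS) / 2)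
                    - ((G - 1) * (1 + nS) / 2) * Real.logb 2 ((G - 1) * (1 + nS) / 2)))
            ≤ 2 * K * c * δ * Real.sqrt n := by
  have hlog2 : 0 < Real.log 2 := Real.log_pos (by norm_num)
  have ht0 : 0 < (G-1)/2 := by linarith
  -- the linear-bound constant
  set L : ℝ := Real.log (1+(G-1)/2) - Real.log ((G-1)/2) with hL
  have hLpos : 0 < L := by
    have := Real.log_lt_log ht0 (by linarith : (G-1)/2 < 1 + (G-1)/2)
    simp only [hL]; linarith
  set K : ℝ := L * (G+1) / (2 * Real.log 2) with hK
  have hKpos : 0 < K := by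
    apply div_pos (by nlinarith) (by linarith)
  -- linear bound on the raw difference
  have hlin : ∀ nS : ℝ, 0 ≤ nS →
      (gln (((G + 1) * nS + (G - 1)) / 2) - gln ((G - 1) * (1 + nS) / 2)) / Real.log 2
        ≤ K * nS := by
    intro nS hnS
    have hb : (G-1)/2 ≤ (G - 1) * (1 + nS) / 2 := by nlinarith
    have ha : (G-1)/2 ≤ ((G + 1) * nS + (G - 1)) / 2 := by nlinarith
    have h1 := (gln_mono_slope ht0 hb).1
    have h2 := (gln_mono_slope ht0 ha).2
    have h3 : gln (((G + 1) * nS + (G - 1)) / 2) - gln ((G - 1) * (1 + nS) / 2)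
        ≤ L * ((G+1) * nS / 2) := by
      have : (((G + 1) * nS + (G - 1)) / 2 - (G-1)/2) = (G+1) * nS / 2 := by ring
      rw [this] at h2
      linarith
    rw [div_le_iff₀ hlog2]
    calc gln (((G + 1) * nS + (G - 1)) / 2) - gln ((G - 1) * (1 + nS) / 2)
        ≤ L * ((G+1) * nS / 2) := h3
      _ = K * nS * Real.log 2 := by
          rw [hK]; field_simp
  -- the max-bound
  have hmaxK : ∀ nS : ℝ, 0 ≤ nS →
      max 0 (((1 + ((G + 1) * nS + (G - 1)) / 2) * Real.logb 2 (1 + ((G + 1) * nS + (G - 1)) / 2)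
              - (((G + 1) * nS + (G - 1)) / 2) * Real.logb 2 (((G + 1) * nS + (G - 1)) / 2))
            - ((1 + (G - 1) * (1 + nS) / 2) * Real.logb 2 (1 + (G - 1) * (1 + nS) / 2)
              - ((G - 1) * (1 + nS) / 2) * Real.logb 2 ((G - 1) * (1 + nS) / 2)))
        ≤ K * nS := by
    intro nS hnS
    rw [expr_eq]
    exact max_le (by positivity) (hlin nS hnS)
  refine ⟨?_, K, hKpos, fun nS hnS => hmaxK nS hnS.1, ?_⟩
  · intro x y hx hxy
    rw [expr_eq, expr_eq]
    exact max_le_max le_rfl (div_le_div_of_nonneg_right (F_mono G hG hx hxy) hlog2.le)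
  · intro n c δ nS hc hδ hnS hnS1 hbound
    rcases Nat.eq_zero_or_pos n with rfl | hn
    · simp only [Nat.cast_zero, zero_mul, Real.sqrt_zero, mul_zero]
      norm_num
    · have hsq : 0 < Real.sqrt n := Real.sqrt_pos.mpr (by exact_mod_cast hn)
      have h1 := hmaxK nS hnS
      have h2 : (n : ℝ) * max 0 _ ≤ (n : ℝ) * (K * nS) :=
        mul_le_mul_of_nonneg_left h1 (Nat.cast_nonneg n)
      refine le_trans h2 ?_
      have h3 : K * nS ≤ K * (2 * c * δ / Real.sqrt n) :=
        mul_le_mul_of_nonneg_left hbound hKpos.le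
      have h4 : (n : ℝ) * (K * nS) ≤ (n : ℝ) * (K * (2 * c * δ / Real.sqrt n)) :=
        mul_le_mul_of_nonneg_left h3 (Nat.cast_nonneg n)
      have hgen : ∀ K' : ℝ, (n:ℝ) * (K' * (2 * c * δ / Real.sqrt n))
          = 2 * K' * c * δ * Real.sqrt n := by
        intro K'
        have hdiv : (n : ℝ) / Real.sqrt n = Real.sqrt n := by
          rw [eq_comm, eq_div_iff hsq.ne', Real.mul_self_sqrt (Nat.cast_nonneg n)]
        rw [show (n:ℝ) * (K' * (2 * c * δ / Real.sqrt n))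
              = ((n:ℝ) / Real.sqrt n) * (2 * K' * c * δ) from by ring, hdiv]
        ring
      exact le_trans h4 (le_of_eq (hgen K))
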